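/- (Stability bound for DSP-WENO.) If -3/8 ≤ C_1 ≤ 1/8 and -3/8 ≤ C_2 ≤ 1/8 (consistency of the weights), then the reconstructed jump satisfies |⟦z⟧_{i+1/2}| ≤ (1/2)|Δz_{i-1/2}| + |Δz_{i+1/2}| + (1/2)|Δz_{i+3/2}|. -/
import Mathlib


/-- Stability bound for DSP-WENO: if `-3/8 ≤ C₁ ≤ 1/8` and
`-3/8 ≤ C₂ ≤ 1/8`, then the reconstructed jump satisfies
`|⟦z⟧_{i+1/2}| ≤ (1/2)|Δz_{i-1/2}| + |Δz_{i+1/2}| + (1/2)|Δz_{i+3/2}|`. -/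
theorem dsp_weno_stability_bound (zm z0 z1 z2 C1 C2 : ℝ)
    (hC1l : -(3/8) ≤ C1) (hC1u : C1 ≤ 1/8)
    (hC2l : -(3/8) ≤ C2) (hC2u : C2 ≤ 1/8) :
    |((1/4 - 2*C2)*(3*z1 - z2) + (3/4 + 2*C2)*(z0 + z1))/2
      - ((3/4 + 2*C1)*(z0 + z1) + (1/4 - 2*C1)*(3*z0 - zm))/2|
    ≤ (1/2)*|z0 - zm| + |z1 - z0| + (1/2)*|z2 - z1| := by
  have ha1 : -(|z0 - zm|) ≤ z0 - zm := neg_abs_le _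
  have ha2 : z0 - zm ≤ |z0 - zm| := le_abs_self _
  have hb1 : -(|z1 - z0|) ≤ z1 - z0 := neg_abs_le _
  have hb2 : z1 - z0 ≤ |z1 - z0| := le_abs_self _
  have hc1 : -(|z2 - z1|) ≤ z2 - z1 := neg_abs_le _
  have hc2 : z2 - z1 ≤ |z2 - z1| := le_abs_self _
  have h1 : (0:ℝ) ≤ (1/8 - C1) * (|z0 - zm| + (z0 - zm)) :=
    mul_nonneg (by linarith) (by linarith)
  have h2 : (0:ℝ) ≤ (1/8 - C1) * (|z0 - zm| - (z0 - zm)) :=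
    mul_nonneg (by linarith) (by linarith)
  have h3 : (0:ℝ) ≤ (1/8 - C2) * (|z2 - z1| + (z2 - z1)) :=
    mul_nonneg (by linarith) (by linarith)
  have h4 : (0:ℝ) ≤ (1/8 - C2) * (|z2 - z1| - (z2 - z1)) :=
    mul_nonneg (by linarith) (by linarith)
  have h5 : (0:ℝ) ≤ (1/4 - C1 - C2) * (|z1 - z0| + (z1 - z0)) :=
    mul_nonneg (by linarith) (by linarith)
  have h6 : (0:ℝ) ≤ (1/4 - C1 - C2) * (|z1 - z0| - (z1 - z0)) :=
    mul_nonneg (by linarith) (by linarith)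
  have h7 : (0:ℝ) ≤ (C1 + 3/8) * |z0 - zm| :=
    mul_nonneg (by linarith) (abs_nonneg _)
  have h8 : (0:ℝ) ≤ (C2 + 3/8) * |z2 - z1| :=
    mul_nonneg (by linarith) (abs_nonneg _)
  have h9 : (0:ℝ) ≤ (C1 + C2 + 3/4) * |z1 - z0| :=
    mul_nonneg (by linarith) (abs_nonneg _)
  rw [abs_le]
  constructor <;> linarith [h1, h2, h3, h4, h5, h6, h7, h8, h9]
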